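/- Let a ∈ ℝ, let I_f be an interval with least element a, nonempty interior, and I_f ⊂ [a,∞), let Ω ⊂ ℝ^m be a nonempty open set, let α = (α₁,…,α_m) ∈ (0,1]^m, let q_a ∈ Ω, and let f : Ω × I_f → ℝ^m be a Carathéodory function that is bounded on compacts and locally Lipschitz continuous in its first variable. Then the Caputo Cauchy problem ( _cD^{α_i}_{a+}[q_i] = f_i(q(·),·) a.e., q(a) = q_a ) has a local solution: there exist ε > 0 with [a,a+ε] ⊂ I_f and a continuous q : [a,a+ε] → Ω with q(a) = q_a such that q_i(t) = (q_a)_i + (1/Γ(α_i)) ∫_a^t (t−τ)^{α_i−1} f_i(q(τ),τ) dτ for every t ∈ [a,a+ε] and every i. -/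

import Mathlib

open MeasureTheory Set

/-- Left Riemann–Liouville fractional integral of order `α` with base point `a`
(for `α = 0` it is the identity). -/
noncomputable def rlInt (a α : ℝ) (q : ℝ → ℝ) (t : ℝ) : ℝ :=
  if α = 0 then q t else (1 / Real.Gamma α) * ∫ τ in a..t, (t - τ) ^ (α - 1) * q τ

/-- `I` is an interval with least element `a`, nonempty interior, and `I ⊆ [a,∞)`. -/
def IsIntervalFrom (a : ℝ) (I : Set ℝ) : Prop :=
  a ∈ I ∧ I ⊆ Set.Ici a ∧ (interior I).Nonempty ∧ I.OrdConnected

/-- `(q, I)` is a local solution of the Caputo Cauchy problem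
`_cD^{α_i}_{a+}[q_i] = F_i(q(·),·)` a.e., `q(a) = qa`, on the domain `Ω`:
`I ⊆ If` is an interval with least element `a` and nonempty interior, `q` is continuous
on `I` with values in `Ω` and `q(a) = qa`, and for each `i` the function
`I^{1-α_i}_{a+}[q_i - (qa)_i]` agrees a.e. on `I` with a locally absolutely continuous
function `t ↦ c + ∫_a^t h` whose derivative `h` (the Caputo fractional derivative of
`q_i`) equals `F_i(q(t), t)` for almost every `t ∈ I`. -/
def IsCaputoLocalSol (a : ℝ) (If : Set ℝ) {m : ℕ}
    (Ω : Set (EuclideanSpace ℝ (Fin m))) (α : Fin m → ℝ)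
    (qa : EuclideanSpace ℝ (Fin m))
    (F : EuclideanSpace ℝ (Fin m) → ℝ → EuclideanSpace ℝ (Fin m))
    (q : ℝ → EuclideanSpace ℝ (Fin m)) (I : Set ℝ) : Prop :=
  IsIntervalFrom a I ∧ I ⊆ If ∧ ContinuousOn q I ∧ (∀ t ∈ I, q t ∈ Ω) ∧ q a = qa ∧
  ∀ i, ∃ c : ℝ, ∃ h : ℝ → ℝ,
    (∀ b ∈ I, MeasureTheory.IntegrableOn h (Set.Icc a b)) ∧
    (∀ᵐ t ∂(MeasureTheory.volume.restrict I),
      rlInt a (1 - α i) (fun τ => q τ i - qa i) t = c + ∫ τ in a..t, h τ) ∧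
    (∀ᵐ t ∂(MeasureTheory.volume.restrict I), h t = F (q t) t i)

/-- `(q, I)` is a maximal local solution of the Caputo Cauchy problem:
every extension `(q', I')` of it satisfies `I' = I`. -/
def IsMaximalSol (a : ℝ) (If : Set ℝ) {m : ℕ}
    (Ω : Set (EuclideanSpace ℝ (Fin m))) (α : Fin m → ℝ)
    (qa : EuclideanSpace ℝ (Fin m))
    (F : EuclideanSpace ℝ (Fin m) → ℝ → EuclideanSpace ℝ (Fin m))
    (q : ℝ → EuclideanSpace ℝ (Fin m)) (I : Set ℝ) : Prop :=
  IsCaputoLocalSol a If Ω α qa F q I ∧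
  ∀ (q' : ℝ → EuclideanSpace ℝ (Fin m)) (I' : Set ℝ),
    IsCaputoLocalSol a If Ω α qa F q' I' → I ⊆ I' → Set.EqOn q' q I → I' = I

open scoped NNReal

lemma kint {α : ℝ} (hα : 0 < α) (t c d : ℝ) :
    IntervalIntegrable (fun τ => (t - τ) ^ (α - 1)) volume c d := by
  have h := (intervalIntegral.intervalIntegrable_rpow' (a := t - c) (b := t - d)
    (r := α - 1) (by linarith)).comp_sub_left t
  simpa using h

lemma kval {α : ℝ} (hα : 0 < α) (t c d : ℝ) :
    ∫ τ in c..d, (t - τ) ^ (α - 1) = ((t - c) ^ α - (t - d) ^ α) / α := by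
  have h := intervalIntegral.integral_comp_sub_left (a := c) (b := d)
    (fun x => x ^ (α - 1)) t
  rw [h, integral_rpow (Or.inl (by linarith))]
  ring_nf

lemma pint {α : ℝ} (hα : 0 < α) {c d t M : ℝ} (hcd : c ≤ d) (hdt : d ≤ t) {g : ℝ → ℝ}
    (hg : AEStronglyMeasurable g (volume.restrict (Ioc c d)))
    (hb : ∀ᵐ τ ∂volume.restrict (Ioc c d), |g τ| ≤ M) :
    IntervalIntegrable (fun τ => (t - τ) ^ (α - 1) * g τ) volume c d := by
  rw [intervalIntegrable_iff_integrableOn_Ioc_of_le hcd]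
  have hker : IntegrableOn (fun τ => (t - τ) ^ (α - 1)) (Ioc c d) volume :=
    (intervalIntegrable_iff_integrableOn_Ioc_of_le hcd).1 (kint hα t c d)
  have hkm : AEStronglyMeasurable (fun τ => (t - τ) ^ (α - 1))
      (volume.restrict (Ioc c d)) :=
    ((measurable_const.sub measurable_id).pow_const _).aestronglyMeasurable
  refine Integrable.mono' (hker.const_mul M) (hkm.mul hg) ?_
  filter_upwards [hb, ae_restrict_mem measurableSet_Ioc] with τ hτ hmem
  have hk0 : 0 ≤ (t - τ) ^ (α - 1) := Real.rpow_nonneg (by linarith [hmem.2]) _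
  rw [norm_mul, Real.norm_eq_abs, Real.norm_eq_abs, abs_of_nonneg hk0]
  calc (t - τ) ^ (α - 1) * |g τ| ≤ (t - τ) ^ (α - 1) * M := by
        exact mul_le_mul_of_nonneg_left hτ hk0
    _ = M * (t - τ) ^ (α - 1) := mul_comm _ _

lemma pbound {α : ℝ} (hα : 0 < α) {c d t M : ℝ} (hcd : c ≤ d) (hdt : d ≤ t) (hM : 0 ≤ M)
    {g : ℝ → ℝ}
    (hg : AEStronglyMeasurable g (volume.restrict (Ioc c d)))
    (hb : ∀ᵐ τ ∂volume.restrict (Ioc c d), |g τ| ≤ M) :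
    |∫ τ in c..d, (t - τ) ^ (α - 1) * g τ| ≤ M * ((t - c) ^ α - (t - d) ^ α) / α := by
  have hmono : (t - d) ^ α ≤ (t - c) ^ α :=
    Real.rpow_le_rpow (by linarith) (by linarith) hα.le
  have h := intervalIntegral.norm_integral_le_abs_of_norm_le
    (f := fun τ => (t - τ) ^ (α - 1) * g τ) (g := fun τ => M * (t - τ) ^ (α - 1))
    (μ := volume) (a := c) (b := d) ?_ ((kint hα t c d).const_mul M)
  · rw [Real.norm_eq_abs] at h
    refine h.trans ?_
    rw [intervalIntegral.integral_const_mul, kval hα t c d]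
    rw [abs_of_nonneg (mul_nonneg hM (div_nonneg (sub_nonneg.2 hmono) hα.le)),
      mul_div_assoc]
  · rw [uIoc_of_le hcd]
    filter_upwards [hb, ae_restrict_mem measurableSet_Ioc] with τ hτ hmem
    have hk0 : 0 ≤ (t - τ) ^ (α - 1) := Real.rpow_nonneg (by linarith [hmem.2]) _
    rw [norm_mul, Real.norm_eq_abs, Real.norm_eq_abs, abs_of_nonneg hk0, mul_comm]
    exact mul_le_mul_of_nonneg_right hτ hk0

lemma rpow_subadd {x y p : ℝ} (hx : 0 ≤ x) (hy : 0 ≤ y) (hp : 0 ≤ p) (hp1 : p ≤ 1) :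
    (x + y) ^ p ≤ x ^ p + y ^ p := by
  have h := NNReal.rpow_add_le_add_rpow x.toNNReal y.toNNReal hp hp1
  have hc : ((x.toNNReal + y.toNNReal : ℝ≥0) : ℝ) = x + y := by
    simp [Real.coe_toNNReal, hx, hy]
  calc (x + y) ^ p = (((x.toNNReal + y.toNNReal : ℝ≥0) : ℝ)) ^ p := by rw [hc]
    _ = (((x.toNNReal + y.toNNReal) ^ p : ℝ≥0) : ℝ) := by
        rw [NNReal.coe_rpow]
    _ ≤ ((x.toNNReal ^ p + y.toNNReal ^ p : ℝ≥0) : ℝ) := by exact_mod_cast h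
    _ = x ^ p + y ^ p := by
        push_cast [NNReal.coe_rpow, Real.coe_toNNReal x hx, Real.coe_toNNReal y hy]
        ring
lemma restr_meas {g : ℝ → ℝ} {a b c d : ℝ}
    (hg : AEStronglyMeasurable g (volume.restrict (Ioc a b)))
    (h : Ioc c d ⊆ Ioc a b) : AEStronglyMeasurable g (volume.restrict (Ioc c d)) :=
  hg.mono_measure (Measure.restrict_mono h le_rfl)

lemma pholder {α : ℝ} (hα0 : 0 < α) (hα1 : α ≤ 1) {a b M : ℝ} (hM : 0 ≤ M) {g : ℝ → ℝ}
    (hg : AEStronglyMeasurable g (volume.restrict (Ioc a b)))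
    (hb : ∀ᵐ τ ∂volume.restrict (Ioc a b), |g τ| ≤ M)
    {t₁ t₂ : ℝ} (h1 : a ≤ t₁) (h12 : t₁ ≤ t₂) (h2 : t₂ ≤ b) :
    |(∫ τ in a..t₂, (t₂ - τ) ^ (α - 1) * g τ) - ∫ τ in a..t₁, (t₁ - τ) ^ (α - 1) * g τ|
      ≤ 2 * M * (t₂ - t₁) ^ α / α := by
  have sub1 : Ioc a t₁ ⊆ Ioc a b := Ioc_subset_Ioc le_rfl (by linarith)
  have sub2 : Ioc t₁ t₂ ⊆ Ioc a b := Ioc_subset_Ioc h1 h2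
  have hg1 := restr_meas hg sub1
  have hg2 := restr_meas hg sub2
  have hb1 := ae_restrict_of_ae_restrict_of_subset sub1 hb
  have hb2 := ae_restrict_of_ae_restrict_of_subset sub2 hb
  have int1 : IntervalIntegrable (fun τ => (t₂ - τ) ^ (α - 1) * g τ) volume a t₁ :=
    pint hα0 h1 h12 hg1 hb1
  have int1' : IntervalIntegrable (fun τ => (t₁ - τ) ^ (α - 1) * g τ) volume a t₁ :=
    pint hα0 h1 le_rfl hg1 hb1
  have int2 : IntervalIntegrable (fun τ => (t₂ - τ) ^ (α - 1) * g τ) volume t₁ t₂ :=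
    pint hα0 h12 le_rfl hg2 hb2
  have hsplit : (∫ τ in a..t₂, (t₂ - τ) ^ (α - 1) * g τ)
      = (∫ τ in a..t₁, (t₂ - τ) ^ (α - 1) * g τ)
        + ∫ τ in t₁..t₂, (t₂ - τ) ^ (α - 1) * g τ :=
    (intervalIntegral.integral_add_adjacent_intervals int1 int2).symm
  have hC : |∫ τ in t₁..t₂, (t₂ - τ) ^ (α - 1) * g τ| ≤ M * (t₂ - t₁) ^ α / α := by
    have h := pbound hα0 h12 le_rfl hM hg2 hb2
    rwa [sub_self, Real.zero_rpow hα0.ne', sub_zero] at h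
  have hAB : |(∫ τ in a..t₁, (t₂ - τ) ^ (α - 1) * g τ)
      - ∫ τ in a..t₁, (t₁ - τ) ^ (α - 1) * g τ| ≤ M * (t₂ - t₁) ^ α / α := by
    rw [← intervalIntegral.integral_sub int1 int1']
    have hne : ∀ᵐ τ ∂(volume.restrict (Ioc a t₁)), τ ≠ t₁ := by
      refine ae_restrict_of_ae ?_
      rw [ae_iff]
      have : {x : ℝ | ¬ x ≠ t₁} = {t₁} := by ext x; simp
      rw [this]; exact measure_singleton t₁
    have hφint : IntervalIntegrable
        (fun τ => M * ((t₁ - τ) ^ (α - 1) - (t₂ - τ) ^ (α - 1))) volume a t₁ :=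
      ((kint hα0 t₁ a t₁).sub (kint hα0 t₂ a t₁)).const_mul M
    have hnorm := intervalIntegral.norm_integral_le_abs_of_norm_le
      (f := fun τ => (t₂ - τ) ^ (α - 1) * g τ - (t₁ - τ) ^ (α - 1) * g τ)
      (g := fun τ => M * ((t₁ - τ) ^ (α - 1) - (t₂ - τ) ^ (α - 1)))
      (μ := volume) (a := a) (b := t₁) ?_ hφint
    · refine hnorm.trans ?_
      have hval : (∫ τ in a..t₁, M * ((t₁ - τ) ^ (α - 1) - (t₂ - τ) ^ (α - 1)))
          = M * (((t₁ - a) ^ α - (t₂ - a) ^ α + (t₂ - t₁) ^ α) / α) := by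
        rw [intervalIntegral.integral_const_mul,
          intervalIntegral.integral_sub (kint hα0 t₁ a t₁) (kint hα0 t₂ a t₁),
          kval hα0 t₁ a t₁, kval hα0 t₂ a t₁, sub_self, Real.zero_rpow hα0.ne']
        ring
      rw [hval]
      have hVnn : 0 ≤ (t₁ - a) ^ α - (t₂ - a) ^ α + (t₂ - t₁) ^ α := by
        have hs : (t₂ - a) ^ α ≤ (t₁ - a) ^ α + (t₂ - t₁) ^ α := by
          have := rpow_subadd (x := t₁ - a) (y := t₂ - t₁) (by linarith) (by linarith)
            hα0.le hα1
          calc (t₂ - a) ^ α = ((t₁ - a) + (t₂ - t₁)) ^ α := by ring_nf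
            _ ≤ (t₁ - a) ^ α + (t₂ - t₁) ^ α := this
        linarith
      have hVle : (t₁ - a) ^ α - (t₂ - a) ^ α + (t₂ - t₁) ^ α ≤ (t₂ - t₁) ^ α := by
        have : (t₁ - a) ^ α ≤ (t₂ - a) ^ α :=
          Real.rpow_le_rpow (by linarith) (by linarith) hα0.le
        linarith
      rw [abs_of_nonneg (mul_nonneg hM (div_nonneg hVnn hα0.le)), mul_div_assoc]
      gcongr
    · rw [uIoc_of_le h1]
      filter_upwards [hb1, ae_restrict_mem measurableSet_Ioc, hne] with τ hτ hmem hτne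
      have hlt : 0 < t₁ - τ := by
        rcases lt_of_le_of_ne hmem.2 hτne with h
        linarith
      have hmono : (t₂ - τ) ^ (α - 1) ≤ (t₁ - τ) ^ (α - 1) :=
        Real.rpow_le_rpow_of_nonpos hlt (by linarith) (by linarith)
      have : (t₂ - τ) ^ (α - 1) * g τ - (t₁ - τ) ^ (α - 1) * g τ
          = ((t₂ - τ) ^ (α - 1) - (t₁ - τ) ^ (α - 1)) * g τ := by ring
      rw [this, Real.norm_eq_abs, abs_mul, abs_sub_comm,
        abs_of_nonneg (sub_nonneg.2 hmono)]
      calc ((t₁ - τ) ^ (α - 1) - (t₂ - τ) ^ (α - 1)) * |g τ|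
          ≤ ((t₁ - τ) ^ (α - 1) - (t₂ - τ) ^ (α - 1)) * M :=
            mul_le_mul_of_nonneg_left hτ (sub_nonneg.2 hmono)
        _ = M * ((t₁ - τ) ^ (α - 1) - (t₂ - τ) ^ (α - 1)) := mul_comm _ _
  calc |(∫ τ in a..t₂, (t₂ - τ) ^ (α - 1) * g τ)
      - ∫ τ in a..t₁, (t₁ - τ) ^ (α - 1) * g τ|
      = |((∫ τ in a..t₁, (t₂ - τ) ^ (α - 1) * g τ)
          - ∫ τ in a..t₁, (t₁ - τ) ^ (α - 1) * g τ)
        + ∫ τ in t₁..t₂, (t₂ - τ) ^ (α - 1) * g τ| := by rw [hsplit]; congr 1; ring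
    _ ≤ _ + _ := abs_add_le _ _
    _ ≤ M * (t₂ - t₁) ^ α / α + M * (t₂ - t₁) ^ α / α := add_le_add hAB hC
    _ = 2 * M * (t₂ - t₁) ^ α / α := by ring
lemma pcont {α : ℝ} (hα0 : 0 < α) (hα1 : α ≤ 1) {a b M : ℝ} (hM : 0 ≤ M) {g : ℝ → ℝ}
    (hg : AEStronglyMeasurable g (volume.restrict (Ioc a b)))
    (hb : ∀ᵐ τ ∂volume.restrict (Ioc a b), |g τ| ≤ M) :
    ContinuousOn (fun t => ∫ τ in a..t, (t - τ) ^ (α - 1) * g τ) (Icc a b) := by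
  set I : ℝ → ℝ := fun t => ∫ τ in a..t, (t - τ) ^ (α - 1) * g τ with hI
  intro t ht
  have key : ∀ s ∈ Icc a b, dist (I s) (I t) ≤ 2 * M * |s - t| ^ α / α := by
    intro s hs
    rcases le_total s t with hst | hts
    · rw [dist_comm, Real.dist_eq]
      have h := pholder hα0 hα1 hM hg hb hs.1 hst ht.2
      have habs : |s - t| = t - s := by
        rw [abs_sub_comm]; exact abs_of_nonneg (by linarith)
      rw [habs]; exact h
    · rw [Real.dist_eq]
      have h := pholder hα0 hα1 hM hg hb ht.1 hts hs.2
      have habs : |s - t| = s - t := abs_of_nonneg (by linarith)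
      rw [habs]; exact h
  have hbt : Filter.Tendsto (fun s => 2 * M * |s - t| ^ α / α)
      (nhdsWithin t (Icc a b)) (nhds 0) := by
    have h1 : Filter.Tendsto (fun s : ℝ => |s - t|) (nhdsWithin t (Icc a b)) (nhds 0) := by
      have hc : Continuous fun s : ℝ => |s - t| := (continuous_id.sub continuous_const).abs
      simpa using (hc.tendsto t).mono_left nhdsWithin_le_nhds
    have h3 := ((Real.continuousAt_rpow_const 0 α (Or.inr hα0.le)).tendsto).comp h1
    rw [Real.zero_rpow hα0.ne'] at h3
    have h4 := (h3.const_mul (2 * M)).div_const α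
    simpa using h4
  rw [ContinuousWithinAt, tendsto_iff_dist_tendsto_zero]
  exact squeeze_zero' (Filter.Eventually.of_forall fun s => dist_nonneg)
    (by filter_upwards [eventually_mem_nhdsWithin] with s hs using key s hs) hbt
section Superpos

variable {m : ℕ}

lemma aesm_comp_nat {μ : Measure ℝ} {G : ℕ → ℝ → EuclideanSpace ℝ (Fin m)}
    (hG : ∀ k, AEStronglyMeasurable (G k) μ) {κ : ℝ → ℕ} (hκ : Measurable κ) :
    AEStronglyMeasurable (fun t => G (κ t) t) μ := by
  choose G' hGm hGe using hG
  have hm : Measurable fun t => G' (κ t) t := by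
    have hp : Measurable fun p : ℝ × ℕ => G' p.2 p.1 :=
      measurable_from_prod_countable_left fun k => stronglyMeasurable_iff_measurable.1 (hGm k)
    exact hp.comp (measurable_id.prodMk hκ)
  refine ⟨fun t => G' (κ t) t, stronglyMeasurable_iff_measurable.2 hm, ?_⟩
  filter_upwards [MeasureTheory.ae_all_iff.2 hGe] with t ht using ht (κ t)

lemma superpos {Ω : Set (EuclideanSpace ℝ (Fin m))}
    {F : EuclideanSpace ℝ (Fin m) → ℝ → EuclideanSpace ℝ (Fin m)} {If : Set ℝ}
    (hFmeas : ∀ x ∈ Ω, AEStronglyMeasurable (fun t => F x t) (volume.restrict If))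
    (hFcont : ∀ᵐ t ∂(volume.restrict If), ContinuousOn (fun x => F x t) Ω)
    {a b : ℝ} (hab : a < b) (hsub : Icc a b ⊆ If)
    {q : ℝ → EuclideanSpace ℝ (Fin m)} (hq : Continuous q)
    (hqΩ : ∀ t ∈ Icc a b, q t ∈ Ω) :
    AEStronglyMeasurable (fun t => F (q t) t) (volume.restrict (Icc a b)) := by
  have hle : volume.restrict (Icc a b) ≤ volume.restrict If :=
    Measure.restrict_mono hsub le_rfl
  have hmeas' : ∀ x ∈ Ω, AEStronglyMeasurable (fun t => F x t) (volume.restrict (Icc a b)) :=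
    fun x hx => (hFmeas x hx).mono_measure hle
  have hcont' : ∀ᵐ t ∂(volume.restrict (Icc a b)), ContinuousOn (fun x => F x t) Ω :=
    hFcont.filter_mono (ae_mono hle)
  have hba : (0:ℝ) < b - a := by linarith
  set p : ℕ → ℕ → ℝ := fun n k => a + (b - a) * k / (n + 1) with hp
  set κ : ℕ → ℝ → ℕ := fun n t => min ⌊(t - a) / (b - a) * (n + 1)⌋₊ n with hκdef
  have hκle : ∀ n t, κ n t ≤ n := fun n t => min_le_right _ _
  have hpmem : ∀ n k, k ≤ n → p n k ∈ Icc a b := by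
    intro n k hk
    have hN : (0:ℝ) < (n:ℝ) + 1 := by positivity
    have hk' : (k : ℝ) ≤ (n : ℝ) + 1 := by
      have : (k:ℝ) ≤ n := Nat.cast_le.2 hk
      linarith
    constructor
    · have : (0:ℝ) ≤ (b - a) * k / (n + 1) := by positivity
      simp only [hp]; linarith
    · have : (b - a) * k / (n + 1) ≤ b - a := by
        rw [div_le_iff₀ hN]
        exact mul_le_mul_of_nonneg_left hk' hba.le |>.trans_eq rfl
      simp only [hp]; linarith
  have hclose : ∀ n, ∀ t ∈ Icc a b, |p n (κ n t) - t| ≤ (b - a) / (n + 1) := by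
    intro n t ht
    have hN : (0:ℝ) < (n:ℝ) + 1 := by positivity
    set x : ℝ := (t - a) / (b - a) * (n + 1) with hx
    have hx0 : 0 ≤ x := by
      have h1 : 0 ≤ t - a := by linarith [ht.1]
      positivity
    have hxle : x ≤ (n:ℝ) + 1 := by
      have h1 : (t - a) / (b - a) ≤ 1 := by
        rw [div_le_one hba]; linarith [ht.2]
      calc x ≤ 1 * ((n:ℝ)+1) := by
            exact mul_le_mul_of_nonneg_right h1 hN.le
        _ = (n:ℝ)+1 := one_mul _
    have hA : ((κ n t : ℕ) : ℝ) ≤ x := by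
      calc ((κ n t : ℕ) : ℝ) ≤ (⌊x⌋₊ : ℝ) := Nat.cast_le.2 (min_le_left _ _)
        _ ≤ x := Nat.floor_le hx0
    have hB : x ≤ ((κ n t : ℕ) : ℝ) + 1 := by
      rcases le_or_gt ⌊x⌋₊ n with h | h
      · have : κ n t = ⌊x⌋₊ := min_eq_left h
        rw [this]
        exact (Nat.lt_floor_add_one x).le
      · have : κ n t = n := min_eq_right h.le
        rw [this]; exact hxle
    have hval : t - p n (κ n t) = (b - a) * (x - κ n t) / ((n:ℝ) + 1) := by
      have htx : t - a = (b - a) * x / ((n:ℝ)+1) := by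
        rw [hx]; field_simp
      simp only [hp]
      rw [eq_div_iff hN.ne']
      have := htx
      field_simp at this ⊢
      linarith [this]
    have h0le : 0 ≤ t - p n (κ n t) := by
      rw [hval]
      have : 0 ≤ x - κ n t := by linarith
      positivity
    have hle1 : t - p n (κ n t) ≤ (b - a) / ((n:ℝ)+1) := by
      rw [hval, div_le_div_iff₀ hN hN]
      have h1 : x - κ n t ≤ 1 := by linarith
      calc (b - a) * (x - ↑(κ n t)) * ((n:ℝ)+1)
          = ((b - a) * ((n:ℝ)+1)) * (x - ↑(κ n t)) := by ring
        _ ≤ ((b - a) * ((n:ℝ)+1)) * 1 := mul_le_mul_of_nonneg_left h1 (by positivity)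
        _ = (b - a) * ((n:ℝ)+1) := mul_one _
    rw [abs_sub_comm, abs_of_nonneg h0le]
    exact hle1
  have htend : ∀ t ∈ Icc a b,
      Filter.Tendsto (fun n => p n (κ n t)) Filter.atTop (nhds t) := by
    intro t ht
    rw [tendsto_iff_dist_tendsto_zero]
    have hb0 : Filter.Tendsto (fun n : ℕ => (b - a) / ((n:ℝ) + 1))
        Filter.atTop (nhds 0) := by
      apply Filter.Tendsto.div_atTop (tendsto_const_nhds)
      exact Filter.tendsto_atTop_add_const_right _ 1 tendsto_natCast_atTop_atTop
    refine squeeze_zero (fun n => dist_nonneg) (fun n => ?_) hb0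
    rw [Real.dist_eq]
    exact hclose n t ht
  set G : ℕ → ℕ → ℝ → EuclideanSpace ℝ (Fin m) :=
    fun n k t => if k ≤ n then F (q (p n k)) t else 0 with hG
  have hgm : ∀ n, AEStronglyMeasurable (fun t => G n (κ n t) t)
      (volume.restrict (Icc a b)) := by
    intro n
    apply aesm_comp_nat
    · intro k
      by_cases hk : k ≤ n
      · simp only [hG, if_pos hk]
        exact hmeas' _ (hqΩ _ (hpmem n k hk))
      · simp only [hG, if_neg hk]
        exact aestronglyMeasurable_const
    · apply Measurable.min ?_ measurable_const
      apply Measurable.nat_floor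
      exact ((measurable_id.sub_const a).div_const _).mul_const _
  apply aestronglyMeasurable_of_tendsto_ae Filter.atTop hgm
  filter_upwards [hcont', ae_restrict_mem measurableSet_Icc] with t hcontt htmem
  have hqt : q t ∈ Ω := hqΩ t htmem
  have h1 : Filter.Tendsto (fun n => q (p n (κ n t))) Filter.atTop (nhds (q t)) :=
    (hq.tendsto t).comp (htend t htmem)
  have hmem : ∀ n, q (p n (κ n t)) ∈ Ω := fun n => hqΩ _ (hpmem n _ (hκle n t))
  have h2 : Filter.Tendsto (fun n => q (p n (κ n t))) Filter.atTop
      (nhdsWithin (q t) Ω) :=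
    tendsto_nhdsWithin_iff.2 ⟨h1, Filter.Eventually.of_forall hmem⟩
  have h3 := ((hcontt (q t) hqt).tendsto.comp h2)
  have heq : ∀ n, G n (κ n t) t = F (q (p n (κ n t))) t := by
    intro n; simp only [hG, if_pos (hκle n t)]
  simpa only [heq, Function.comp_def] using h3

end Superpos
section Upgrade

variable {m : ℕ}

lemma seq_approx {s : Set (EuclideanSpace ℝ (Fin m))} (hsne : s.Nonempty)
    (u : ℕ → ↥s) (hu : DenseRange u) {x : EuclideanSpace ℝ (Fin m)} (hx : x ∈ s) :
    ∃ φ : ℕ → ℕ, Filter.Tendsto (fun n => (u (φ n) : EuclideanSpace ℝ (Fin m)))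
      Filter.atTop (nhds x) := by
  have hcl : (⟨x, hx⟩ : ↥s) ∈ closure (Set.range u) := hu _
  obtain ⟨ψ, hψmem, hψt⟩ := mem_closure_iff_seq_limit.1 hcl
  choose φ hφ using hψmem
  refine ⟨φ, ?_⟩
  have : Filter.Tendsto (fun n => (ψ n : EuclideanSpace ℝ (Fin m)))
      Filter.atTop (nhds x) :=
    (continuous_subtype_val.continuousAt.tendsto).comp hψt
  convert this using 2 with n
  rw [hφ n]

lemma ae_upgrade {Ω : Set (EuclideanSpace ℝ (Fin m))}
    {F : EuclideanSpace ℝ (Fin m) → ℝ → EuclideanSpace ℝ (Fin m)}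
    {s : Set (EuclideanSpace ℝ (Fin m))} (hsΩ : s ⊆ Ω) (hsne : s.Nonempty)
    {μ : Measure ℝ}
    (hcont : ∀ᵐ t ∂μ, ContinuousOn (fun x => F x t) Ω)
    {M L : ℝ}
    (hMb : ∀ x ∈ s, ∀ᵐ t ∂μ, ‖F x t‖ ≤ M)
    (hLb : ∀ x₁ ∈ s, ∀ x₂ ∈ s, ∀ᵐ t ∂μ, ‖F x₂ t - F x₁ t‖ ≤ L * ‖x₂ - x₁‖) :
    ∀ᵐ t ∂μ, (∀ x ∈ s, ‖F x t‖ ≤ M) ∧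
      ∀ x₁ ∈ s, ∀ x₂ ∈ s, ‖F x₂ t - F x₁ t‖ ≤ L * ‖x₂ - x₁‖ := by
  haveI : Nonempty ↥s := hsne.to_subtype
  obtain ⟨u, hu⟩ := TopologicalSpace.exists_dense_seq ↥s
  have hall1 : ∀ᵐ t ∂μ, ∀ n, ‖F (u n) t‖ ≤ M :=
    MeasureTheory.ae_all_iff.2 fun n => hMb _ (u n).2
  have hall2 : ∀ᵐ t ∂μ, ∀ n k, ‖F ((u k : ↥s) : EuclideanSpace ℝ (Fin m)) t
      - F (u n) t‖ ≤ L * ‖((u k : ↥s) : EuclideanSpace ℝ (Fin m)) - (u n : EuclideanSpace ℝ (Fin m))‖ :=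
    MeasureTheory.ae_all_iff.2 fun n => MeasureTheory.ae_all_iff.2 fun k =>
      hLb _ (u n).2 _ (u k).2
  filter_upwards [hcont, hall1, hall2] with t hct h1 h2
  have tendF : ∀ x ∈ s, ∀ φ : ℕ → ℕ,
      Filter.Tendsto (fun n => (u (φ n) : EuclideanSpace ℝ (Fin m)))
        Filter.atTop (nhds x) →
      Filter.Tendsto (fun n => F (u (φ n)) t) Filter.atTop (nhds (F x t)) := by
    intro x hx φ hφ
    have hWin : Filter.Tendsto (fun n => (u (φ n) : EuclideanSpace ℝ (Fin m)))
        Filter.atTop (nhdsWithin x Ω) :=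
      tendsto_nhdsWithin_iff.2 ⟨hφ, Filter.Eventually.of_forall fun n => hsΩ (u (φ n)).2⟩
    exact (hct x (hsΩ hx)).tendsto.comp hWin
  constructor
  · intro x hx
    obtain ⟨φ, hφ⟩ := seq_approx hsne u hu hx
    have hF := tendF x hx φ hφ
    exact le_of_tendsto hF.norm (Filter.Eventually.of_forall fun n => h1 (φ n))
  · intro x₁ hx₁ x₂ hx₂
    obtain ⟨φ₁, hφ₁⟩ := seq_approx hsne u hu hx₁
    obtain ⟨φ₂, hφ₂⟩ := seq_approx hsne u hu hx₂
    have hF₁ := tendF x₁ hx₁ φ₁ hφ₁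
    have hF₂ := tendF x₂ hx₂ φ₂ hφ₂
    have hL : Filter.Tendsto
        (fun n => ‖F (u (φ₂ n)) t - F (u (φ₁ n)) t‖) Filter.atTop
        (nhds ‖F x₂ t - F x₁ t‖) := (hF₂.sub hF₁).norm
    have hR : Filter.Tendsto
        (fun n => L * ‖(u (φ₂ n) : EuclideanSpace ℝ (Fin m)) - (u (φ₁ n) : EuclideanSpace ℝ (Fin m))‖)
        Filter.atTop (nhds (L * ‖x₂ - x₁‖)) := ((hφ₂.sub hφ₁).norm).const_mul L
    exact le_of_tendsto_of_tendsto' hL hR fun n => h2 (φ₁ n) (φ₂ n)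

end Upgrade
lemma coord_abs_le_norm {m : ℕ} (x : EuclideanSpace ℝ (Fin m)) (i : Fin m) :
    |x i| ≤ ‖x‖ := by
  rw [EuclideanSpace.norm_eq]
  rw [show |x i| = Real.sqrt (‖x i‖ ^ 2) by
    rw [Real.sqrt_sq_eq_abs]; simp [Real.norm_eq_abs]]
  exact Real.sqrt_le_sqrt (Finset.single_le_sum (f := fun j => ‖x j‖ ^ 2)
    (fun j _ => sq_nonneg _) (Finset.mem_univ i))

lemma norm_le_sqrt_sum {m : ℕ} (x : EuclideanSpace ℝ (Fin m)) (c : Fin m → ℝ)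
    (h : ∀ i, |x i| ≤ c i) : ‖x‖ ≤ Real.sqrt (∑ i, (c i) ^ 2) := by
  rw [EuclideanSpace.norm_eq]
  apply Real.sqrt_le_sqrt
  apply Finset.sum_le_sum
  intro i _
  rw [Real.norm_eq_abs]
  exact pow_le_pow_left₀ (abs_nonneg _) (h i) 2
theorem statement16 (a : ℝ) (If : Set ℝ)
    (haI : a ∈ If) (hIsub : If ⊆ Set.Ici a) (hIint : (interior If).Nonempty)
    (hIord : If.OrdConnected)
    (m : ℕ) (hm : 0 < m) (Ω : Set (EuclideanSpace ℝ (Fin m)))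
    (hΩopen : IsOpen Ω) (hΩne : Ω.Nonempty)
    (α : Fin m → ℝ) (hα : ∀ i, 0 < α i ∧ α i ≤ 1)
    (qa : EuclideanSpace ℝ (Fin m)) (hqa : qa ∈ Ω)
    (F : EuclideanSpace ℝ (Fin m) → ℝ → EuclideanSpace ℝ (Fin m))
    -- Carathéodory assumptions
    (hFmeas : ∀ x ∈ Ω, MeasureTheory.AEStronglyMeasurable (fun t => F x t)
      (MeasureTheory.volume.restrict If))
    (hFcont : ∀ᵐ t ∂(MeasureTheory.volume.restrict If), ContinuousOn (fun x => F x t) Ω)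
    -- `F` is bounded on compacts
    (hbdd : ∀ K : Set (EuclideanSpace ℝ (Fin m)), K ⊆ Ω → IsCompact K →
      ∀ c ∈ If, ∀ d ∈ If, c ≤ d → ∃ M : ℝ, 0 ≤ M ∧ ∀ x ∈ K,
        ∀ᵐ t ∂(MeasureTheory.volume.restrict (Set.Icc c d)), ‖F x t‖ ≤ M)
    -- `F` is locally Lipschitz continuous in its first variable
    (hlip : ∀ x ∈ Ω, ∀ t ∈ If, ∃ R > (0:ℝ), ∃ δ > (0:ℝ), ∃ L : ℝ, 0 ≤ L ∧
      Metric.closedBall x R ⊆ Ω ∧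
      ∀ x₁ ∈ Metric.closedBall x R, ∀ x₂ ∈ Metric.closedBall x R,
        ∀ᵐ τ ∂(MeasureTheory.volume.restrict (Set.Icc (t - δ) (t + δ) ∩ If)),
          ‖F x₂ τ - F x₁ τ‖ ≤ L * ‖x₂ - x₁‖) :
    ∃ ε > (0:ℝ), Set.Icc a (a + ε) ⊆ If ∧
      ∃ q : ℝ → EuclideanSpace ℝ (Fin m),
        ContinuousOn q (Set.Icc a (a + ε)) ∧
        (∀ t ∈ Set.Icc a (a + ε), q t ∈ Ω) ∧ q a = qa ∧
        ∀ t ∈ Set.Icc a (a + ε), ∀ i,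
          q t i = qa i
            + (1 / Real.Gamma (α i)) * ∫ τ in a..t, (t - τ) ^ (α i - 1) * F (q τ) τ i := by
  classical
  -- Step 1: a nondegenerate interval [a, b0] inside If
  obtain ⟨x, hx⟩ := hIint
  obtain ⟨r, hr, hballx⟩ := Metric.isOpen_iff.1 isOpen_interior x hx
  have hxIf : x ∈ If := interior_subset hx
  have hxa : a ≤ x := hIsub hxIf
  have hb0If : x + r / 2 ∈ If := by
    apply interior_subset (hballx ?_)
    rw [Metric.mem_ball, Real.dist_eq]
    rw [abs_of_pos (by linarith : (0:ℝ) < x + r/2 - x)]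
    linarith
  set b0 : ℝ := x + r / 2 with hb0def
  have hab0 : a < b0 := by simp only [hb0def]; linarith
  have hIcc0 : Icc a b0 ⊆ If := hIord.out haI hb0If
  -- Step 2: local Lipschitz data at (qa, a)
  obtain ⟨R, hR, δ, hδ, L, hL0, hballΩ, hlipae⟩ := hlip qa hqa a haI
  -- Step 3: b1
  set b1 : ℝ := min b0 (a + δ) with hb1def
  have hab1 : a < b1 := lt_min hab0 (by linarith)
  have hb1If : b1 ∈ If := hIcc0 ⟨hab1.le, min_le_left _ _⟩
  have hIcc1 : Icc a b1 ⊆ If := hIord.out haI hb1If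
  -- Step 4: bound M on the closed ball
  obtain ⟨M, hM0, hMb⟩ := hbdd (Metric.closedBall qa R) hballΩ
    (isCompact_closedBall qa R) a haI b1 hb1If hab1.le
  -- Step 5: transfer Lipschitz and continuity to Icc a b1
  have hsub1 : Icc a b1 ⊆ Icc (a - δ) (a + δ) ∩ If := by
    intro t ht
    refine ⟨⟨by linarith [ht.1], le_trans ht.2 (min_le_right _ _)⟩, hIcc1 ht⟩
  have hlip1 : ∀ x₁ ∈ Metric.closedBall qa R, ∀ x₂ ∈ Metric.closedBall qa R,
      ∀ᵐ τ ∂(volume.restrict (Icc a b1)), ‖F x₂ τ - F x₁ τ‖ ≤ L * ‖x₂ - x₁‖ :=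
    fun x₁ h₁ x₂ h₂ => ae_restrict_of_ae_restrict_of_subset hsub1 (hlipae x₁ h₁ x₂ h₂)
  have hcont1 : ∀ᵐ t ∂(volume.restrict (Icc a b1)), ContinuousOn (fun x => F x t) Ω :=
    hFcont.filter_mono (ae_mono (Measure.restrict_mono hIcc1 le_rfl))
  have hae1 := ae_upgrade hballΩ ⟨qa, Metric.mem_closedBall_self hR.le⟩ hcont1 hMb hlip1
  -- Step 6: choose ε
  have hΓ : ∀ i, 0 < Real.Gamma (α i) := fun i => Real.Gamma_pos_of_pos (hα i).1
  set CM : Fin m → ℝ := fun i => M / (Real.Gamma (α i) * α i) with hCMdef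
  set CL : Fin m → ℝ := fun i => L / (Real.Gamma (α i) * α i) with hCLdef
  have hrp : ∀ i, Filter.Tendsto (fun e : ℝ => e ^ α i)
      (nhdsWithin 0 (Ioi 0)) (nhds 0) := by
    intro i
    have h := (Real.continuousAt_rpow_const 0 (α i) (Or.inr (hα i).1.le)).tendsto
    rw [Real.zero_rpow (hα i).1.ne'] at h
    exact h.mono_left nhdsWithin_le_nhds
  have hsum : ∀ C : Fin m → ℝ, Filter.Tendsto (fun e : ℝ => ∑ i, (C i * e ^ α i) ^ 2)
      (nhdsWithin 0 (Ioi 0)) (nhds 0) := by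
    intro C
    have hterm : ∀ i : Fin m, Filter.Tendsto (fun e : ℝ => (C i * e ^ α i) ^ 2)
        (nhdsWithin 0 (Ioi 0)) (nhds 0) := by
      intro i
      have h := (((hrp i).const_mul (C i)).pow 2)
      simpa using h
    have h := tendsto_finset_sum (Finset.univ : Finset (Fin m)) (fun i _ => hterm i)
    simpa using h
  have hev1 : ∀ᶠ e in nhdsWithin (0:ℝ) (Ioi 0), ∑ i, (CM i * e ^ α i) ^ 2 < R ^ 2 :=
    (hsum CM).eventually_lt_const (by positivity)
  have hev2 : ∀ᶠ e in nhdsWithin (0:ℝ) (Ioi 0), ∑ i, (CL i * e ^ α i) ^ 2 < 1 :=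
    (hsum CL).eventually_lt_const one_pos
  have hev3 : ∀ᶠ e in nhdsWithin (0:ℝ) (Ioi 0), e < b1 - a := by
    have hid : Filter.Tendsto (fun e : ℝ => e) (nhdsWithin 0 (Ioi 0)) (nhds 0) :=
      Filter.tendsto_id.mono_right nhdsWithin_le_nhds
    exact hid.eventually_lt_const (by linarith)
  have hev4 : ∀ᶠ e in nhdsWithin (0:ℝ) (Ioi 0), e ∈ Ioi (0:ℝ) :=
    eventually_mem_nhdsWithin
  obtain ⟨ε, hε1, hε2, hε3, hε0⟩ := (hev1.and (hev2.and (hev3.and hev4))).exists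
  replace hε0 : (0:ℝ) < ε := hε0
  set b : ℝ := a + ε with hbdef
  have hab : a < b := by simp only [hbdef]; linarith
  have hbb1 : b ≤ b1 := by simp only [hbdef]; linarith
  have hJ1 : Icc a b ⊆ Icc a b1 := Icc_subset_Icc le_rfl hbb1
  have hJIf : Icc a b ⊆ If := hJ1.trans hIcc1
  have hae : ∀ᵐ t ∂(volume.restrict (Icc a b)),
      (∀ x ∈ Metric.closedBall qa R, ‖F x t‖ ≤ M) ∧
      ∀ x₁ ∈ Metric.closedBall qa R, ∀ x₂ ∈ Metric.closedBall qa R,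
        ‖F x₂ t - F x₁ t‖ ≤ L * ‖x₂ - x₁‖ :=
    ae_restrict_of_ae_restrict_of_subset hJ1 hae1
  -- Step 7: per-function measurability and bounds
  have hIocIcc : ∀ t ∈ Icc a b, Ioc a t ⊆ Icc a b :=
    fun t ht => Ioc_subset_Icc_self.trans (Icc_subset_Icc le_rfl ht.2)
  have hWmeas : ∀ (w : ℝ → EuclideanSpace ℝ (Fin m)), Continuous w →
      (∀ τ ∈ Icc a b, w τ ∈ Metric.closedBall qa R) → ∀ i, ∀ t ∈ Icc a b,
      AEStronglyMeasurable (fun τ => F (w τ) τ i) (volume.restrict (Ioc a t)) := by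
    intro w hw1 hw2 i t ht
    have h0 : AEStronglyMeasurable (fun τ => F (w τ) τ) (volume.restrict (Icc a b)) :=
      superpos hFmeas hFcont hab hJIf hw1 (fun τ hτ => hballΩ (hw2 τ hτ))
    have h1 : AEStronglyMeasurable (fun τ => F (w τ) τ i)
        (volume.restrict (Icc a b)) :=
      (EuclideanSpace.proj i).continuous.comp_aestronglyMeasurable h0
    exact h1.mono_measure (Measure.restrict_mono (hIocIcc t ht) le_rfl)
  have hWbound : ∀ (w : ℝ → EuclideanSpace ℝ (Fin m)),
      (∀ τ ∈ Icc a b, w τ ∈ Metric.closedBall qa R) → ∀ i, ∀ t ∈ Icc a b,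
      ∀ᵐ τ ∂(volume.restrict (Ioc a t)), |F (w τ) τ i| ≤ M := by
    intro w hw2 i t ht
    have h := ae_restrict_of_ae_restrict_of_subset (hIocIcc t ht) hae
    filter_upwards [h, ae_restrict_mem measurableSet_Ioc] with τ hτ hmem
    have hτI : τ ∈ Icc a b := ⟨hmem.1.le, hmem.2.trans ht.2⟩
    calc |F (w τ) τ i| ≤ ‖F (w τ) τ‖ := coord_abs_le_norm _ i
      _ ≤ M := hτ.1 _ (hw2 τ hτI)
  -- Step 8: the Picard operator
  set P : (ℝ → EuclideanSpace ℝ (Fin m)) → ℝ → EuclideanSpace ℝ (Fin m) :=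
    fun w t => (EuclideanSpace.equiv (Fin m) ℝ).symm
      (fun i => qa i + (1 / Real.Gamma (α i)) *
        ∫ τ in a..t, (t - τ) ^ (α i - 1) * F (w τ) τ i) with hPdef
  have hPapply : ∀ w t i, P w t i = qa i + (1 / Real.Gamma (α i)) *
      ∫ τ in a..t, (t - τ) ^ (α i - 1) * F (w τ) τ i := fun w t i => rfl
  have hPcont : ∀ w, Continuous w → (∀ τ ∈ Icc a b, w τ ∈ Metric.closedBall qa R) →
      ContinuousOn (P w) (Icc a b) := by
    intro w hw1 hw2
    have hcoord : ∀ i, ContinuousOn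
        (fun t => ∫ τ in a..t, (t - τ) ^ (α i - 1) * F (w τ) τ i) (Icc a b) := by
      intro i
      exact pcont (hα i).1 (hα i).2 hM0 (hWmeas w hw1 hw2 i b ⟨hab.le, le_rfl⟩)
        (hWbound w hw2 i b ⟨hab.le, le_rfl⟩)
    have hpi : ContinuousOn (fun t => (fun i => qa i + (1 / Real.Gamma (α i)) *
        ∫ τ in a..t, (t - τ) ^ (α i - 1) * F (w τ) τ i : Fin m → ℝ)) (Icc a b) :=
      continuousOn_pi.2 fun i => continuousOn_const.add (continuousOn_const.mul (hcoord i))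
    exact (EuclideanSpace.equiv (Fin m) ℝ).symm.continuous.comp_continuousOn hpi
  have hPball : ∀ w, Continuous w → (∀ τ ∈ Icc a b, w τ ∈ Metric.closedBall qa R) →
      ∀ t ∈ Icc a b, P w t ∈ Metric.closedBall qa R := by
    intro w hw1 hw2 t ht
    rw [Metric.mem_closedBall, dist_eq_norm]
    have hcoord : ∀ i, |(P w t - qa) i| ≤ CM i * ε ^ α i := by
      intro i
      have hgpos := hΓ i
      have hapos := (hα i).1
      have h1 : (P w t - qa) i = (1 / Real.Gamma (α i)) *
          ∫ τ in a..t, (t - τ) ^ (α i - 1) * F (w τ) τ i := by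
        have h2 : (P w t - qa) i = P w t i - qa i := rfl
        rw [h2, hPapply]; ring
      rw [h1, abs_mul, abs_of_nonneg (by positivity : (0:ℝ) ≤ 1 / Real.Gamma (α i))]
      have h3 := pbound (hα i).1 ht.1 le_rfl hM0
        (hWmeas w hw1 hw2 i t ht) (hWbound w hw2 i t ht)
      rw [sub_self, Real.zero_rpow (hα i).1.ne', sub_zero] at h3
      have h4 : (t - a) ^ α i ≤ ε ^ α i :=
        Real.rpow_le_rpow (by linarith [ht.1]) (by linarith [ht.2]) (hα i).1.le
      calc (1 / Real.Gamma (α i)) * |∫ τ in a..t, (t - τ) ^ (α i - 1) * F (w τ) τ i|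
          ≤ (1 / Real.Gamma (α i)) * (M * (t - a) ^ α i / α i) :=
            mul_le_mul_of_nonneg_left h3 (by positivity)
        _ ≤ (1 / Real.Gamma (α i)) * (M * ε ^ α i / α i) := by gcongr
        _ = CM i * ε ^ α i := by
            simp only [hCMdef]; field_simp; try ring
    have h5 := norm_le_sqrt_sum (P w t - qa) (fun i => CM i * ε ^ α i) hcoord
    refine h5.trans ?_
    calc Real.sqrt (∑ i, (CM i * ε ^ α i) ^ 2) ≤ Real.sqrt (R ^ 2) :=
          Real.sqrt_le_sqrt hε1.le
      _ = R := Real.sqrt_sq hR.le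
  -- Step 9: the complete metric space of candidate curves
  set SS : Set C(↥(Icc a b), EuclideanSpace ℝ (Fin m)) :=
    {u | ∀ t, u t ∈ Metric.closedBall qa R} with hSSdef
  have hSclosed : IsClosed SS := by
    have h : SS = ⋂ t, (fun u : C(↥(Icc a b), EuclideanSpace ℝ (Fin m)) => u t) ⁻¹'
        (Metric.closedBall qa R) := by
      ext u; simp [hSSdef, Set.mem_iInter]
    rw [h]
    exact isClosed_iInter fun t =>
      Metric.isClosed_closedBall.preimage (continuous_eval_const t)
  haveI := hSclosed.completeSpace_coe
  haveI : Nonempty ↥SS :=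
    ⟨⟨ContinuousMap.const _ qa, fun t => Metric.mem_closedBall_self hR.le⟩⟩
  set wfun : ↥SS → ℝ → EuclideanSpace ℝ (Fin m) :=
    fun u => IccExtend hab.le ⇑(u : C(↥(Icc a b), EuclideanSpace ℝ (Fin m))) with hwdef
  have hwcont : ∀ u : ↥SS, Continuous (wfun u) :=
    fun u => (map_continuous _).Icc_extend'
  have hwball : ∀ u : ↥SS, ∀ τ : ℝ, wfun u τ ∈ Metric.closedBall qa R :=
    fun u τ => u.2 _
  have hwval : ∀ u : ↥SS, ∀ t : ↥(Icc a b),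
      wfun u ↑t = (u : C(↥(Icc a b), EuclideanSpace ℝ (Fin m))) t := by
    intro u t
    simp only [hwdef]
    rw [IccExtend_of_mem hab.le _ t.2]
  -- Step 10: the operator T
  have hTex : ∀ u : ↥SS, ∃ v : ↥SS, ∀ t : ↥(Icc a b),
      ((v : C(↥(Icc a b), EuclideanSpace ℝ (Fin m))) t) = P (wfun u) ↑t := by
    intro u
    refine ⟨⟨⟨fun t => P (wfun u) ↑t, ?_⟩, ?_⟩, fun t => rfl⟩
    · exact (hPcont (wfun u) (hwcont u) (fun τ _ => hwball u τ)).restrict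
    · intro t
      exact hPball _ (hwcont u) (fun τ _ => hwball u τ) ↑t t.2
  choose T hT using hTex
  -- Step 11: contraction
  set κ : ℝ := Real.sqrt (∑ i, (CL i * ε ^ α i) ^ 2) with hκdef
  have hκ0 : 0 ≤ κ := Real.sqrt_nonneg _
  have hκ1 : κ < 1 := by
    have h := Real.sqrt_lt_sqrt (Finset.sum_nonneg fun i _ => sq_nonneg _) hε2
    rwa [Real.sqrt_one] at h
  have hdist : ∀ u v : ↥SS, dist (T u) (T v) ≤ κ * dist u v := by
    intro u v
    rw [Subtype.dist_eq, ContinuousMap.dist_le (mul_nonneg hκ0 dist_nonneg)]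
    intro t
    rw [hT u t, hT v t]
    set D : ℝ := dist (u : C(↥(Icc a b), EuclideanSpace ℝ (Fin m)))
      (v : C(↥(Icc a b), EuclideanSpace ℝ (Fin m))) with hDdef
    have hD0 : 0 ≤ D := dist_nonneg
    have hsubI : Ioc a ↑t ⊆ Icc a b := hIocIcc ↑t t.2
    have haeI := ae_restrict_of_ae_restrict_of_subset hsubI hae
    have hcoord : ∀ i, |(P (wfun u) ↑t - P (wfun v) ↑t) i| ≤ CL i * ε ^ α i * D := by
      intro i
      have hgpos := hΓ i
      have hapos := (hα i).1
      have hiu := hWmeas (wfun u) (hwcont u) (fun τ _ => hwball u τ) i ↑t t.2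
      have hiv := hWmeas (wfun v) (hwcont v) (fun τ _ => hwball v τ) i ↑t t.2
      have hbu := hWbound (wfun u) (fun τ _ => hwball u τ) i ↑t t.2
      have hbv := hWbound (wfun v) (fun τ _ => hwball v τ) i ↑t t.2
      have hintu : IntervalIntegrable
          (fun τ => ((t:ℝ) - τ) ^ (α i - 1) * F (wfun u τ) τ i) volume a ↑t :=
        pint (hα i).1 t.2.1 le_rfl hiu hbu
      have hintv : IntervalIntegrable
          (fun τ => ((t:ℝ) - τ) ^ (α i - 1) * F (wfun v τ) τ i) volume a ↑t :=
        pint (hα i).1 t.2.1 le_rfl hiv hbv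
      have h3 : (∫ τ in a..(t:ℝ), ((t:ℝ) - τ) ^ (α i - 1) *
            (F (wfun u τ) τ i - F (wfun v τ) τ i))
          = (∫ τ in a..(t:ℝ), ((t:ℝ) - τ) ^ (α i - 1) * F (wfun u τ) τ i)
            - ∫ τ in a..(t:ℝ), ((t:ℝ) - τ) ^ (α i - 1) * F (wfun v τ) τ i := by
        rw [← intervalIntegral.integral_sub hintu hintv]
        apply intervalIntegral.integral_congr
        intro τ _
        ring
      have h1 : (P (wfun u) ↑t - P (wfun v) ↑t) i = (1 / Real.Gamma (α i)) *
          ∫ τ in a..(t:ℝ), ((t:ℝ) - τ) ^ (α i - 1) *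
            (F (wfun u τ) τ i - F (wfun v τ) τ i) := by
        have h2 : (P (wfun u) ↑t - P (wfun v) ↑t) i
            = P (wfun u) ↑t i - P (wfun v) ↑t i := rfl
        rw [h2, hPapply, hPapply, h3]
        ring
      have hgD : ∀ᵐ τ ∂(volume.restrict (Ioc a ↑t)),
          |F (wfun u τ) τ i - F (wfun v τ) τ i| ≤ L * D := by
        filter_upwards [haeI, ae_restrict_mem measurableSet_Ioc] with τ hτ hmem
        have hτI : τ ∈ Icc a b := hsubI hmem
        have hlipτ := hτ.2 _ (hwball v τ) _ (hwball u τ)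
        have hc : |F (wfun u τ) τ i - F (wfun v τ) τ i|
            ≤ ‖F (wfun u τ) τ - F (wfun v τ) τ‖ := by
          have h := coord_abs_le_norm (F (wfun u τ) τ - F (wfun v τ) τ) i
          exact h
        refine hc.trans (hlipτ.trans ?_)
        have hdd : ‖wfun u τ - wfun v τ‖ ≤ D := by
          rw [← dist_eq_norm]
          have h := ContinuousMap.dist_apply_le_dist
            (f := (u : C(↥(Icc a b), EuclideanSpace ℝ (Fin m))))
            (g := (v : C(↥(Icc a b), EuclideanSpace ℝ (Fin m)))) ⟨τ, hτI⟩
          have heu : wfun u τ = (u : C(↥(Icc a b), EuclideanSpace ℝ (Fin m))) ⟨τ, hτI⟩ := by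
            simp only [hwdef]; rw [IccExtend_of_mem hab.le _ hτI]
          have hev : wfun v τ = (v : C(↥(Icc a b), EuclideanSpace ℝ (Fin m))) ⟨τ, hτI⟩ := by
            simp only [hwdef]; rw [IccExtend_of_mem hab.le _ hτI]
          rw [heu, hev]
          exact h
        exact mul_le_mul_of_nonneg_left hdd hL0
      have hmeasdiff : AEStronglyMeasurable
          (fun τ => F (wfun u τ) τ i - F (wfun v τ) τ i)
          (volume.restrict (Ioc a ↑t)) := hiu.sub hiv
      have h4 := pbound (hα i).1 t.2.1 le_rfl (mul_nonneg hL0 hD0) hmeasdiff hgD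
      rw [sub_self, Real.zero_rpow (hα i).1.ne', sub_zero] at h4
      rw [h1, abs_mul, abs_of_nonneg (by positivity : (0:ℝ) ≤ 1 / Real.Gamma (α i))]
      have h5 : ((t:ℝ) - a) ^ α i ≤ ε ^ α i :=
        Real.rpow_le_rpow (by linarith [t.2.1]) (by linarith [t.2.2]) (hα i).1.le
      calc (1 / Real.Gamma (α i)) * |∫ τ in a..(t:ℝ), ((t:ℝ) - τ) ^ (α i - 1) *
            (F (wfun u τ) τ i - F (wfun v τ) τ i)|
          ≤ (1 / Real.Gamma (α i)) * (L * D * ((t:ℝ) - a) ^ α i / α i) :=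
            mul_le_mul_of_nonneg_left h4 (by positivity)
        _ ≤ (1 / Real.Gamma (α i)) * (L * D * ε ^ α i / α i) := by
            gcongr
        _ = CL i * ε ^ α i * D := by
            simp only [hCLdef]; field_simp; try ring
    rw [dist_eq_norm]
    have h5 := norm_le_sqrt_sum _ (fun i => CL i * ε ^ α i * D) hcoord
    refine h5.trans ?_
    have h6 : ∑ i, (CL i * ε ^ α i * D) ^ 2 = (∑ i, (CL i * ε ^ α i) ^ 2) * D ^ 2 := by
      rw [Finset.sum_mul]
      exact Finset.sum_congr rfl fun i _ => by ring
    rw [h6, Real.sqrt_mul (Finset.sum_nonneg fun i _ => sq_nonneg _), Real.sqrt_sq hD0]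
    have h7 : D = dist u v := (Subtype.dist_eq u v).symm
    rw [← hκdef, h7]
  -- Step 12: fixed point
  have hcontr : ContractingWith κ.toNNReal T := by
    constructor
    · exact Real.toNNReal_lt_one.2 hκ1
    · refine LipschitzWith.of_dist_le_mul fun u v => ?_
      rw [Real.coe_toNNReal κ hκ0]
      exact hdist u v
  set q0 : ↥SS := ContractingWith.fixedPoint T hcontr with hq0def
  have hfix : T q0 = q0 := hcontr.fixedPoint_isFixedPt
  set q : ℝ → EuclideanSpace ℝ (Fin m) := wfun q0 with hqdef
  have hqq : ∀ t, ∀ ht : t ∈ Icc a b, q t = P q t := by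
    intro t ht
    have h1 : q t = (q0 : C(↥(Icc a b), EuclideanSpace ℝ (Fin m))) ⟨t, ht⟩ :=
      hwval q0 ⟨t, ht⟩
    rw [h1, ← hfix, hT q0 ⟨t, ht⟩]
  refine ⟨ε, hε0, ?_, q, ?_, ?_, ?_, ?_⟩
  · rw [← hbdef]; exact hJIf
  · exact (hwcont q0).continuousOn
  · intro t _; exact hballΩ (hwball q0 t)
  · have h := hqq a ⟨le_rfl, hab.le⟩
    rw [h]
    ext i
    rw [hPapply, intervalIntegral.integral_same, mul_zero, add_zero]
  · intro t ht i
    rw [← hbdef] at ht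
    rw [hqq t ht]
    exact hPapply q t i
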